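/- arXiv:2110.10367 — 5 statements merged into one kernel-verified Lean document; each statement's English description precedes it below -/
import Mathlib

section
/- Let n be a positive integer, and let m1 = 2r+1 and m2 = 2s+1 be odd positive integers. Suppose (X^j = (x_1^j, …, x_{2r+1}^j) : j = 1, …, n) is a PDM(n, 2r+1) (rows indexed by j) and (Y^j = (y_1^j, …, y_{2s+1}^j) : j = 1, …, n) is a PDM(n, 2s+1). Define the n×(2r+1)(2s+1) matrix Z by z^j_{(i−1)(2s+1)+h} = (2s+1)·x_i^j + y_h^j for 1 ≤ i ≤ 2r+1 and 1 ≤ h ≤ 2s+1. Then Z is a PDM(n, (2r+1)(2s+1)). -/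
/-- For odd `m = 2r+1`, the set `I_m = {-r, …, r}`. -/
noncomputable def Iset (m : ℕ) : Finset ℤ := Finset.Icc (-(((m : ℤ) - 1) / 2)) (((m : ℤ) - 1) / 2)

/-- `f` comprises all elements of `S` exactly once (entries from `S`,
each element of `S` appearing exactly once). -/
def rowPerfect {ι : Type*} (S : Finset ℤ) (f : ι → ℤ) : Prop :=
  (∀ j, f j ∈ S) ∧ ∀ z ∈ S, ∃! j, f j = z

/-- `D` is a perfect difference matrix based on the set `S`: every row
comprises all elements of `S` exactly once, and the componentwise differences
of any two distinct rows comprise all elements of `S` exactly once. -/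
def IsPDMOn {n : ℕ} {ι : Type*} (S : Finset ℤ) (D : Fin n → ι → ℤ) : Prop :=
  (∀ i, rowPerfect S (D i)) ∧
  ∀ s t : Fin n, s < t → rowPerfect S (fun j => D t j - D s j)

/-- There exists a `PDM(n,m)`. -/
def PDMexists (n m : ℕ) : Prop := ∃ D : Fin n → Fin m → ℤ, IsPDMOn (Iset m) D

/-- There exists an `SIPDM(n,m,1)` (standard incomplete PDM with hole `{0}`). -/
def SIPDMexists (n m : ℕ) : Prop :=
  ∃ D : Fin n → Fin (m - 1) → ℤ, IsPDMOn (Iset m \ {0}) D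

/-- Directed list of differences of a block, as a multiset. -/
def deltaB (B : Finset ℤ) : Multiset ℤ :=
  ((B ×ˢ B).filter (fun p => p.2 < p.1)).val.map (fun p => p.1 - p.2)

/-- Directed list of differences of a family of blocks. -/
def deltaFam {t : ℕ} (B : Fin t → Finset ℤ) : Multiset ℤ :=
  (Finset.univ.val : Multiset (Fin t)).bind (fun i => deltaB (B i))

/-- A `(v,4,1)`-PDP with `t` blocks covering `H ⊆ [1,(v-1)/2]`: the directed
differences of the blocks cover each element of `H` exactly once and nothing else. -/
def IsPDP4 (v t : ℕ) (B : Fin t → Finset ℤ) (H : Finset ℤ) : Prop :=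
  (∀ i, (B i).card = 4) ∧ H ⊆ Finset.Icc 1 (((v : ℤ) - 1) / 2) ∧ deltaFam B = H.val

lemma mem_Iset_odd (r : ℕ) (z : ℤ) : z ∈ Iset (2 * r + 1) ↔ -(r:ℤ) ≤ z ∧ z ≤ r := by
  have h : (((2 * r + 1 : ℕ) : ℤ) - 1) / 2 = r := by
    have : ((2 * r + 1 : ℕ) : ℤ) - 1 = 2 * r := by push_cast; ring
    rw [this, Int.mul_ediv_cancel_left _ two_ne_zero]
  simp [Iset, h, Finset.mem_Icc]

lemma mem_Iset_mul (r s : ℕ) (z : ℤ) :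
    z ∈ Iset ((2 * r + 1) * (2 * s + 1)) ↔
      -(2 * (r:ℤ) * s + r + s) ≤ z ∧ z ≤ 2 * (r:ℤ) * s + r + s := by
  have h : ((((2 * r + 1) * (2 * s + 1) : ℕ) : ℤ) - 1) / 2 = 2 * (r:ℤ) * s + r + s := by
    have : (((2 * r + 1) * (2 * s + 1) : ℕ) : ℤ) - 1 = 2 * (2 * (r:ℤ) * s + r + s) := by
      push_cast; ring
    rw [this, Int.mul_ediv_cancel_left _ two_ne_zero]
  simp only [Iset, h, Finset.mem_Icc]

lemma decomp_exists (r s : ℕ) (z : ℤ) (hz : z ∈ Iset ((2 * r + 1) * (2 * s + 1))) :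
    ∃ a b : ℤ, a ∈ Iset (2 * r + 1) ∧ b ∈ Iset (2 * s + 1) ∧
      z = (2 * (s:ℤ) + 1) * a + b := by
  rw [mem_Iset_mul] at hz
  set m : ℤ := 2 * (s:ℤ) + 1 with hm
  have hmpos : (0:ℤ) < m := by positivity
  set q : ℤ := (z + s) / m with hq
  set w : ℤ := (z + s) % m with hw
  have hdiv : m * q + w = z + s := Int.mul_ediv_add_emod _ _
  have hw0 : 0 ≤ w := Int.emod_nonneg _ (by omega)
  have hwlt : w < m := Int.emod_lt_of_pos _ hmpos
  refine ⟨q, w - s, ?_, ?_, ?_⟩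
  · rw [mem_Iset_odd]
    constructor
    · have : m * (-(r:ℤ) - 1) < m * q := by nlinarith
      have := lt_of_mul_lt_mul_left this (le_of_lt hmpos)
      omega
    · have : m * q < m * ((r:ℤ) + 1) := by nlinarith
      have := lt_of_mul_lt_mul_left this (le_of_lt hmpos)
      omega
  · rw [mem_Iset_odd]; omega
  · linarith [hdiv]

lemma decomp_unique (r s : ℕ) {a b a' b' : ℤ}
    (ha : a ∈ Iset (2 * r + 1)) (hb : b ∈ Iset (2 * s + 1))
    (ha' : a' ∈ Iset (2 * r + 1)) (hb' : b' ∈ Iset (2 * s + 1))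
    (h : (2 * (s:ℤ) + 1) * a + b = (2 * (s:ℤ) + 1) * a' + b') : a = a' ∧ b = b' := by
  rw [mem_Iset_odd] at ha hb ha' hb'
  have key : (2 * (s:ℤ) + 1) * (a - a') = b' - b := by ring_nf; linarith
  have : a = a' := by
    by_contra hne
    rcases lt_or_gt_of_ne hne with hlt | hgt
    · have : a - a' ≤ -1 := by omega
      nlinarith
    · have : 1 ≤ a - a' := by omega
      nlinarith
  constructor
  · exact this
  · rw [this] at h; linarith

lemma decomp_mem (r s : ℕ) {a b : ℤ}
    (ha : a ∈ Iset (2 * r + 1)) (hb : b ∈ Iset (2 * s + 1)) :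
    (2 * (s:ℤ) + 1) * a + b ∈ Iset ((2 * r + 1) * (2 * s + 1)) := by
  rw [mem_Iset_odd] at ha hb
  rw [mem_Iset_mul]
  constructor <;> nlinarith

lemma rowPerfect_prod (r s : ℕ) (f : Fin (2 * r + 1) → ℤ) (g : Fin (2 * s + 1) → ℤ)
    (hf : rowPerfect (Iset (2 * r + 1)) f) (hg : rowPerfect (Iset (2 * s + 1)) g)
    (h : Fin ((2 * r + 1) * (2 * s + 1)) → ℤ)
    (hh : ∀ (i : Fin (2 * r + 1)) (j : Fin (2 * s + 1)),
      h ⟨i.val * (2 * s + 1) + j.val, by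
        calc i.val * (2 * s + 1) + j.val < i.val * (2 * s + 1) + (2 * s + 1) := by omega
          _ = (i.val + 1) * (2 * s + 1) := by ring
          _ ≤ (2 * r + 1) * (2 * s + 1) := Nat.mul_le_mul_right _ i.isLt⟩ =
        (2 * (s:ℤ) + 1) * f i + g j) :
    rowPerfect (Iset ((2 * r + 1) * (2 * s + 1))) h := by
  -- general form: h k = (2s+1) f (k / (2s+1)) + g (k % (2s+1))
  have key : ∀ k : Fin ((2 * r + 1) * (2 * s + 1)),
      ∃ (i : Fin (2 * r + 1)) (j : Fin (2 * s + 1)),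
        k.val = i.val * (2 * s + 1) + j.val ∧ h k = (2 * (s:ℤ) + 1) * f i + g j := by
    intro k
    have hk := k.isLt
    have hi : k.val / (2 * s + 1) < 2 * r + 1 := by
      exact Nat.div_lt_of_lt_mul (Nat.lt_of_lt_of_eq hk (Nat.mul_comm _ _))
    have hj : k.val % (2 * s + 1) < 2 * s + 1 := Nat.mod_lt _ (by omega)
    have hke : (⟨k.val / (2 * s + 1) * (2 * s + 1) + k.val % (2 * s + 1), by
        calc k.val / (2 * s + 1) * (2 * s + 1) + k.val % (2 * s + 1)
            < k.val / (2 * s + 1) * (2 * s + 1) + (2 * s + 1) := by omega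
          _ = (k.val / (2 * s + 1) + 1) * (2 * s + 1) := by ring
          _ ≤ (2 * r + 1) * (2 * s + 1) := Nat.mul_le_mul_right _ hi⟩ :
        Fin ((2 * r + 1) * (2 * s + 1))) = k :=
      Fin.ext (by simpa [Nat.mul_comm] using Nat.div_add_mod k.val (2 * s + 1))
    refine ⟨⟨_, hi⟩, ⟨_, hj⟩, ?_, ?_⟩
    · exact (congrArg Fin.val hke).symm
    · have := hh ⟨_, hi⟩ ⟨_, hj⟩
      rwa [show (⟨(⟨k.val / (2 * s + 1), hi⟩ : Fin (2*r+1)).val * (2 * s + 1) +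
          (⟨k.val % (2 * s + 1), hj⟩ : Fin (2*s+1)).val, _⟩ :
          Fin ((2 * r + 1) * (2 * s + 1))) = k from hke] at this
  constructor
  · intro k
    obtain ⟨i, j, _, hk⟩ := key k
    rw [hk]
    exact decomp_mem r s (hf.1 i) (hg.1 j)
  · intro z hz
    obtain ⟨a, b, ha, hb, hab⟩ := decomp_exists r s z hz
    obtain ⟨i, hi, hiu⟩ := hf.2 a ha
    obtain ⟨j, hj, hju⟩ := hg.2 b hb
    refine ⟨⟨i.val * (2 * s + 1) + j.val, by
        calc i.val * (2 * s + 1) + j.val < i.val * (2 * s + 1) + (2 * s + 1) := by omega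
          _ = (i.val + 1) * (2 * s + 1) := by ring
          _ ≤ (2 * r + 1) * (2 * s + 1) := Nat.mul_le_mul_right _ i.isLt⟩, ?_, ?_⟩
    · show h _ = z
      rw [hh i j, hi, hj, hab]
    · intro k hk
      obtain ⟨i', j', hval, hform⟩ := key k
      rw [hform, hab] at hk
      obtain ⟨hfa, hgb⟩ := decomp_unique r s (hf.1 i') (hg.1 j') ha hb hk
      have hi' : i' = i := hiu i' hfa
      have hj' : j' = j := hju j' hgb
      apply Fin.ext
      rw [hval, hi', hj']

/-- Theorem 2.1, product construction for PDMs.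
If `X` is a `PDM(n, 2r+1)` and `Y` is a `PDM(n, 2s+1)`, then the `n × (2r+1)(2s+1)`
matrix `Z` with `z^j_{(i-1)(2s+1)+h} = (2s+1)·x_i^j + y_h^j` is a
`PDM(n, (2r+1)(2s+1))`. -/
theorem stmt0 (n r s : ℕ) (hn : 0 < n)
    (X : Fin n → Fin (2 * r + 1) → ℤ) (Y : Fin n → Fin (2 * s + 1) → ℤ)
    (hX : IsPDMOn (Iset (2 * r + 1)) X) (hY : IsPDMOn (Iset (2 * s + 1)) Y)
    (Z : Fin n → Fin ((2 * r + 1) * (2 * s + 1)) → ℤ)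
    (hZ : ∀ (j : Fin n) (i : Fin (2 * r + 1)) (h : Fin (2 * s + 1)),
      Z j ⟨i.val * (2 * s + 1) + h.val, by
        calc i.val * (2 * s + 1) + h.val < i.val * (2 * s + 1) + (2 * s + 1) := by omega
          _ = (i.val + 1) * (2 * s + 1) := by ring
          _ ≤ (2 * r + 1) * (2 * s + 1) := Nat.mul_le_mul_right _ i.isLt⟩ =
        (2 * (s : ℤ) + 1) * X j i + Y j h) :
    IsPDMOn (Iset ((2 * r + 1) * (2 * s + 1))) Z := by
  obtain ⟨hXrow, hXdiff⟩ := hX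
  obtain ⟨hYrow, hYdiff⟩ := hY
  constructor
  · intro j
    exact rowPerfect_prod r s (X j) (Y j) (hXrow j) (hYrow j) (Z j) (fun i h => hZ j i h)
  · intro a b hab
    exact rowPerfect_prod r s (fun i => X b i - X a i) (fun h => Y b h - Y a h)
      (hXdiff a b hab) (hYdiff a b hab) (fun k => Z b k - Z a k)
      (fun i h => by rw [hZ b i h, hZ a i h]; ring)
end

section
/- Let t and c be positive integers. If there exists a (t,4,c)-PSDS, then, with S = {c, c+1, …, 6t+c−1}, there exists a 3×12t integer matrix with entries from S ∪ (−S) such that the entries of each row comprise all elements of S ∪ (−S) exactly once and, for each pair of distinct rows, the componentwise differences comprise all elements of S ∪ (−S) exactly once. Furthermore, if c = 1, then there exists a PDM(3, 12t+1). -/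
/-- A `(t,4,c)`-PSDS: `t` blocks of size `4` whose directed differences cover
each element of `{c, …, c+6t-1}` exactly once and nothing else. -/
def IsPSDS4 (t : ℕ) (c : ℤ) (B : Fin t → Finset ℤ) : Prop :=
  (∀ i, (B i).card = 4) ∧ deltaFam B = (Finset.Icc c (c + 6 * t - 1)).val

/- ---------------------------------------------------------------------- -/
/- Auxiliary material for the proof. -/

namespace Stmt1Aux

/-- The sharply 2-transitive set `AGL(1,4)` of 12 permutations of `Fin 4`. -/
def Pm : Fin 12 → Fin 4 → Fin 4 :=
 ![![0,1,2,3],![1,0,3,2],![2,3,0,1],![3,2,1,0],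
   ![0,2,3,1],![1,3,2,0],![2,0,1,3],![3,1,0,2],
   ![0,3,1,2],![1,2,0,3],![2,1,3,0],![3,0,2,1]]

/-- The "upper triangle" pairs in `Fin 4 × Fin 4`. -/
def PLT : Finset (Fin 4 × Fin 4) := Finset.univ.filter (fun p => p.2 < p.1)

set_option maxRecDepth 4000 in
lemma Pmap : ∀ x y : Fin 4, x ≠ y →
    (Finset.univ.val.map fun k => (Pm k x, Pm k y)) =
      PLT.val + PLT.val.map Prod.swap := by decide

lemma rowPerfect_of_map {ι : Type*} [Fintype ι] (S : Finset ℤ) (f : ι → ℤ)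
    (h : Finset.univ.val.map f = S.val) : rowPerfect S f := by
  constructor
  · intro j
    have : f j ∈ Finset.univ.val.map f := Multiset.mem_map_of_mem f (Finset.mem_univ j)
    rwa [h] at this
  · intro z hz
    have h1 : Multiset.count z (Finset.univ.val.map f) = 1 := by
      rw [h]; exact Multiset.count_eq_one_of_mem S.nodup hz
    rw [Multiset.count_map] at h1
    obtain ⟨j0, hj0⟩ := Multiset.card_eq_one.mp h1
    have hj0mem : j0 ∈ Multiset.filter (fun a => z = f a) Finset.univ.val := by
      rw [hj0]; exact Multiset.mem_singleton_self j0
    refine ⟨j0, (Multiset.mem_filter.mp hj0mem).2.symm, ?_⟩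
    intro j hj
    have : j ∈ Multiset.filter (fun a => z = f a) Finset.univ.val :=
      Multiset.mem_filter.mpr ⟨Finset.mem_univ j, hj.symm⟩
    rw [hj0] at this
    exact Multiset.mem_singleton.mp this

lemma block_filter (A : Fin 4 → ℤ) (hA : StrictMono A) (Bi : Finset ℤ)
    (him : ∀ b, b ∈ Bi ↔ ∃ u, A u = b) :
    (Bi ×ˢ Bi).filter (fun p => p.2 < p.1) =
      PLT.map ⟨Prod.map A A, Prod.map_injective.mpr ⟨hA.injective, hA.injective⟩⟩ := by
  ext p
  simp only [Finset.mem_filter, Finset.mem_product, Finset.mem_map, PLT,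
    Function.Embedding.coeFn_mk, Prod.exists]
  constructor
  · rintro ⟨⟨h1, h2⟩, hlt⟩
    obtain ⟨u, hu⟩ := (him p.1).mp h1
    obtain ⟨v, hv⟩ := (him p.2).mp h2
    refine ⟨u, v, ⟨Finset.mem_univ _, ?_⟩, ?_⟩
    · simpa using hA.lt_iff_lt.mp (by rw [hu, hv]; exact hlt)
    · simp [Prod.map, hu, hv]
  · rintro ⟨u, v, ⟨-, hvu⟩, hp⟩
    subst hp
    simp only [Prod.map] at *
    exact ⟨⟨(him _).mpr ⟨u, rfl⟩, (him _).mpr ⟨v, rfl⟩⟩, hA (by simpa using hvu)⟩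

lemma block_map (A : Fin 4 → ℤ) (hA : StrictMono A) (Bi : Finset ℤ)
    (him : ∀ b, b ∈ Bi ↔ ∃ u, A u = b) (x y : Fin 4) (hxy : x ≠ y) :
    (Finset.univ.val.map fun k => A (Pm k x) - A (Pm k y)) =
      deltaB Bi + (deltaB Bi).map (fun z => -z) := by
  have hd : deltaB Bi = PLT.val.map (fun p => A p.1 - A p.2) := by
    rw [deltaB, block_filter A hA Bi him]
    rw [Finset.map_val, Multiset.map_map]
    rfl
  have := congrArg (Multiset.map (fun p : Fin 4 × Fin 4 => A p.1 - A p.2)) (Pmap x y hxy)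
  rw [Multiset.map_map, Multiset.map_add, Multiset.map_map] at this
  rw [show ((fun p : Fin 4 × Fin 4 => A p.1 - A p.2) ∘ Prod.swap)
      = (fun z : ℤ => -z) ∘ (fun p : Fin 4 × Fin 4 => A p.1 - A p.2) by
        funext p; simp [Prod.swap],
    ← Multiset.map_map] at this
  rw [hd]
  exact this

lemma rowPerfect_snoc {n : ℕ} {T : Finset ℤ} (h0 : (0:ℤ) ∉ T) (f : Fin n → ℤ)
    (hf : rowPerfect T f) : rowPerfect (insert 0 T) (Fin.snoc f 0) := by
  obtain ⟨hmem, huniq⟩ := hf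
  constructor
  · intro j
    rcases Fin.eq_castSucc_or_eq_last j with ⟨i, rfl⟩ | rfl
    · rw [Fin.snoc_castSucc]; exact Finset.mem_insert_of_mem (hmem i)
    · rw [Fin.snoc_last]; exact Finset.mem_insert_self 0 T
  · intro z hz
    rcases Finset.mem_insert.mp hz with rfl | hzT
    · refine ⟨Fin.last n, by simp, ?_⟩
      intro j hj
      rcases Fin.eq_castSucc_or_eq_last j with ⟨i, rfl⟩ | rfl
      · rw [Fin.snoc_castSucc] at hj
        exact absurd (hj ▸ hmem i) h0
      · rfl
    · obtain ⟨j0, hj0, hj0u⟩ := huniq z hzT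
      refine ⟨j0.castSucc, by simp only [Fin.snoc_castSucc]; exact hj0, ?_⟩
      intro j hj
      rcases Fin.eq_castSucc_or_eq_last j with ⟨i, rfl⟩ | rfl
      · rw [Fin.snoc_castSucc] at hj
        rw [hj0u i hj]
      · rw [Fin.snoc_last] at hj
        exact absurd (hj ▸ hzT) h0

end Stmt1Aux

open Stmt1Aux in
/-- Lemma 2.2.  If a `(t,4,c)`-PSDS exists, then, with
`S = {c, …, 6t+c-1}`, there is a `3 × 12t` matrix that is a perfect difference
matrix based on `S ∪ (-S)`; furthermore, if `c = 1`, then a `PDM(3, 12t+1)` exists. -/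
theorem stmt1 (t : ℕ) (c : ℤ) (ht : 0 < t) (hc : 0 < c)
    (B : Fin t → Finset ℤ) (hB : IsPSDS4 t c B) :
    (∃ D : Fin 3 → Fin (12 * t) → ℤ,
      IsPDMOn (Finset.Icc c (c + 6 * t - 1) ∪
        (Finset.Icc c (c + 6 * t - 1)).image (fun z => -z)) D) ∧
    (c = 1 → PDMexists 3 (12 * t + 1)) := by
  obtain ⟨h4, hdel⟩ := hB
  set Ic : Finset ℤ := Finset.Icc c (c + 6 * t - 1) with hIc
  set SS : Finset ℤ := Ic ∪ Ic.image (fun z => -z) with hSS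
  -- the sorted listing of each block
  set A : Fin t → Fin 4 → ℤ := fun i x => (((B i).orderIsoOfFin (h4 i)) x : ℤ) with hA
  have hAmono : ∀ i, StrictMono (A i) := by
    intro i x y hxy
    exact_mod_cast ((B i).orderIsoOfFin (h4 i)).lt_iff_lt.mpr hxy
  have him : ∀ i b, b ∈ B i ↔ ∃ u, A i u = b := by
    intro i b
    constructor
    · intro hb
      obtain ⟨u, hu⟩ := ((B i).orderIsoOfFin (h4 i)).surjective ⟨b, hb⟩
      exact ⟨u, by rw [hA]; exact congrArg Subtype.val hu⟩
    · rintro ⟨u, rfl⟩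
      exact (((B i).orderIsoOfFin (h4 i)) u).2
  -- the multiset identity for S ∪ (-S)
  have hSSval : SS.val = Ic.val + Ic.val.map (fun z => -z) := by
    have hdisj : Disjoint Ic (Ic.image (fun z => -z)) := by
      rw [Finset.disjoint_left]
      intro a ha hb
      rw [hIc, Finset.mem_Icc] at ha
      simp only [Finset.mem_image, hIc, Finset.mem_Icc] at hb
      obtain ⟨w, hw, hwa⟩ := hb
      omega
    have himg : (Ic.image (fun z => -z)).val = Ic.val.map (fun z => -z) := by
      rw [Finset.image_val, Multiset.dedup_eq_self]
      exact Multiset.Nodup.map (fun a b h => by omega) Ic.nodup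
    rw [hSS, ← Finset.disjUnion_eq_union _ _ hdisj,
      show (Ic.disjUnion (Ic.image (fun z => -z)) hdisj).val
        = Ic.val + (Ic.image (fun z => -z)).val from rfl, himg]
  -- the central multiset computation
  have main : ∀ x y : Fin 4, x ≠ y →
      (Finset.univ.val.map fun j : Fin t × Fin 12 => A j.1 (Pm j.2 x) - A j.1 (Pm j.2 y))
        = SS.val := by
    intro x y hxy
    rw [← Finset.univ_product_univ, Finset.product_val,
      show (Finset.univ.val ×ˢ Finset.univ.val : Multiset (Fin t × Fin 12))
        = (Finset.univ.val : Multiset (Fin t)).bind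
            (fun a => (Finset.univ.val : Multiset (Fin 12)).map (Prod.mk a)) from rfl,
      Multiset.map_bind]
    have hstep : ∀ i : Fin t,
        (Multiset.map (fun j : Fin t × Fin 12 => A j.1 (Pm j.2 x) - A j.1 (Pm j.2 y))
          ((Finset.univ.val : Multiset (Fin 12)).map (Prod.mk i)))
        = deltaB (B i) + (deltaB (B i)).map (fun z => -z) := by
      intro i
      rw [Multiset.map_map]
      exact block_map (A i) (hAmono i) (B i) (him i) x y hxy
    rw [Multiset.bind_congr (fun i _ => hstep i), Multiset.bind_add]
    have h1 : ((Finset.univ.val : Multiset (Fin t)).bind fun i => deltaB (B i)) = Ic.val := hdel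
    have h2 : ((Finset.univ.val : Multiset (Fin t)).bind
        fun i => (deltaB (B i)).map (fun z => -z)) = Ic.val.map (fun z => -z) := by
      rw [← Multiset.map_bind, h1]
    rw [h1, h2, hSSval]
  -- the 3 × 12t matrix
  set e : Fin (12 * t) ≃ Fin t × Fin 12 :=
    (finCongr (by ring : 12 * t = t * 12)).trans finProdFinEquiv.symm with he
  set F : Fin 4 → Fin 4 → Fin t × Fin 12 → ℤ :=
    fun x y j => A j.1 (Pm j.2 x) - A j.1 (Pm j.2 y) with hF
  have huniv : (Finset.univ.val.map (⇑e) : Multiset (Fin t × Fin 12)) = Finset.univ.val := by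
    have := congrArg Finset.val (Finset.map_univ_equiv e)
    rwa [Finset.map_val] at this
  have hcomp : ∀ x y : Fin 4, x ≠ y →
      (Finset.univ.val.map fun j : Fin (12 * t) => F x y (e j)) = SS.val := by
    intro x y hxy
    rw [show (fun j : Fin (12 * t) => F x y (e j)) = (F x y) ∘ ⇑e from rfl,
      ← Multiset.map_map, huniv]
    exact main x y hxy
  set D : Fin 3 → Fin (12 * t) → ℤ := fun r j => F r.succ 0 (e j) with hD
  have hrow : ∀ r : Fin 3, rowPerfect SS (D r) := by
    intro r
    exact rowPerfect_of_map SS (D r) (hcomp r.succ 0 (Fin.succ_ne_zero r))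
  have hdiff : ∀ s r : Fin 3, s < r → rowPerfect SS (fun j => D r j - D s j) := by
    intro s r hsr
    have : (fun j => D r j - D s j) = fun j : Fin (12 * t) => F r.succ s.succ (e j) := by
      funext j
      rw [hD, hF]
      ring
    rw [this]
    refine rowPerfect_of_map SS _ (hcomp r.succ s.succ ?_)
    intro h
    exact absurd (Fin.succ_injective _ h) hsr.ne'
  have hPDM : IsPDMOn SS D := ⟨hrow, hdiff⟩
  refine ⟨⟨D, hPDM⟩, ?_⟩
  -- the c = 1 case
  intro hc1
  subst hc1
  have hIset : Iset (12 * t + 1) = insert 0 SS := by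
    have hhalf : (((12 * t + 1 : ℕ) : ℤ) - 1) / 2 = 6 * t := by
      push_cast
      omega
    rw [Iset, hhalf]
    ext z
    simp only [Finset.mem_Icc, Finset.mem_insert, hSS, Finset.mem_union, Finset.mem_image,
      hIc, Finset.mem_Icc]
    constructor
    · intro hz
      by_cases h0 : z = 0
      · exact Or.inl h0
      · refine Or.inr ?_
        by_cases hpos : 0 < z
        · exact Or.inl (by omega)
        · exact Or.inr ⟨-z, by omega, by ring⟩
    · rintro (rfl | h | ⟨w, hw, rfl⟩) <;> omega
  have h0SS : (0 : ℤ) ∉ SS := by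
    rw [hSS]
    simp only [Finset.mem_union, Finset.mem_image, hIc, Finset.mem_Icc]
    push_neg
    constructor
    · omega
    · intro w hw
      omega
  refine ⟨fun r => Fin.snoc (D r) 0, ?_, ?_⟩
  · intro r
    rw [hIset]
    exact rowPerfect_snoc h0SS (D r) (hrow r)
  · intro s r hsr
    have : (fun j : Fin (12 * t + 1) => Fin.snoc (D r) (0:ℤ) j - Fin.snoc (D s) (0:ℤ) j)
        = Fin.snoc (fun j => D r j - D s j) (0:ℤ) := by
      funext j
      rcases Fin.eq_castSucc_or_eq_last j with ⟨i, rfl⟩ | rfl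
      · simp [Fin.snoc_castSucc]
      · simp [Fin.snoc_last]
    rw [this, hIset]
    exact rowPerfect_snoc h0SS _ (hdiff s r hsr)
end

section
/- There exists no SIPDM(3,5,1) and there exists no SIPDM(3,7,1). That is, for m ∈ {5,7} there is no 3×(m−1) integer matrix with entries from I_m \ {0} such that the entries of each row comprise all elements of I_m \ {0} exactly once and, for each pair of distinct rows, the componentwise differences comprise all elements of I_m \ {0} exactly once. -/
lemma rowPerfect_sum {k : ℕ} {S : Finset ℤ} {f : Fin k → ℤ} (h : rowPerfect S f) (g : ℤ → ℤ) :
    ∑ j, g (f j) = ∑ z ∈ S, g z := by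
  classical
  refine Finset.sum_bij (fun j _ => f j) (fun j _ => h.1 j) ?_ ?_ (fun j _ => rfl)
  · intro j _ j' _ hjj
    obtain ⟨u, _, hu⟩ := h.2 (f j) (h.1 j)
    rw [hu j rfl, hu j' hjj.symm]
  · intro z hz
    obtain ⟨j, hj, _⟩ := h.2 z hz
    exact ⟨j, Finset.mem_univ j, hj⟩

lemma colsum_sq {k : ℕ} {S : Finset ℤ} {Q : ℤ} (hQ : ∑ z ∈ S, z ^ 2 = Q)
    {a b c : Fin k → ℤ} (ha : rowPerfect S a) (hb : rowPerfect S b) (hc : rowPerfect S c)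
    (hba : rowPerfect S (fun j => b j - a j)) (hca : rowPerfect S (fun j => c j - a j))
    (hcb : rowPerfect S (fun j => c j - b j)) :
    ∑ j, (a j + b j + c j) ^ 2 = 6 * Q := by
  have Ha : ∑ j, (a j) ^ 2 = Q := by
    simpa using (rowPerfect_sum ha (fun z => z ^ 2)).trans hQ
  have Hb : ∑ j, (b j) ^ 2 = Q := by
    simpa using (rowPerfect_sum hb (fun z => z ^ 2)).trans hQ
  have Hc : ∑ j, (c j) ^ 2 = Q := by
    simpa using (rowPerfect_sum hc (fun z => z ^ 2)).trans hQ
  have Hba : ∑ j, (b j - a j) ^ 2 = Q := by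
    simpa using (rowPerfect_sum hba (fun z => z ^ 2)).trans hQ
  have Hca : ∑ j, (c j - a j) ^ 2 = Q := by
    simpa using (rowPerfect_sum hca (fun z => z ^ 2)).trans hQ
  have Hcb : ∑ j, (c j - b j) ^ 2 = Q := by
    simpa using (rowPerfect_sum hcb (fun z => z ^ 2)).trans hQ
  have E : ∑ j, (a j + b j + c j) ^ 2
      = ∑ j, (3 * (a j) ^ 2 + 3 * (b j) ^ 2 + 3 * (c j) ^ 2
          - (b j - a j) ^ 2 - (c j - a j) ^ 2 - (c j - b j) ^ 2) :=
    Finset.sum_congr rfl fun j _ => by ring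
  rw [E]
  simp only [Finset.sum_sub_distrib, Finset.sum_add_distrib, ← Finset.mul_sum]
  rw [Ha, Hb, Hc, Hba, Hca, Hcb]; ring

/-- Lemma 2.4.  There exist no `SIPDM(3,5,1)` and no `SIPDM(3,7,1)`. -/
theorem stmt3 : ¬ SIPDMexists 3 5 ∧ ¬ SIPDMexists 3 7 := by
  constructor
  · rintro ⟨D, hrows, hdiffs⟩
    have h01 := hdiffs 0 1 (by decide)
    have h02 := hdiffs 0 2 (by decide)
    have h12 := hdiffs 1 2 (by decide)
    have hQ : ∑ z ∈ (Iset 5 \ {0}), z ^ 2 = 10 := by decide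
    have key := colsum_sq hQ (hrows 0) (hrows 1) (hrows 2) h01 h02 h12
    have bound : ∑ j : Fin (5 - 1), (D 0 j + D 1 j + D 2 j) ^ 2 ≤ 16 := by
      have hcol : ∀ j : Fin (5 - 1), (D 0 j + D 1 j + D 2 j) ^ 2 ≤ 4 := by
        intro j
        have h0 := (hrows 0).1 j
        have h1 := (hrows 1).1 j
        have h2 := (hrows 2).1 j
        have d01 := h01.1 j
        have d02 := h02.1 j
        have d12 := h12.1 j
        simp only [Iset, Finset.mem_sdiff, Finset.mem_singleton, Finset.mem_Icc] at h0 h1 h2 d01 d02 d12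
        norm_num at h0 h1 h2 d01 d02 d12
        have hs1 : -2 ≤ D 0 j + D 1 j + D 2 j := by omega
        have hs2 : D 0 j + D 1 j + D 2 j ≤ 2 := by omega
        have := sq_le_sq' hs1 hs2
        norm_num at this
        simpa [sq] using this
      calc ∑ j : Fin (5 - 1), (D 0 j + D 1 j + D 2 j) ^ 2
          ≤ (Finset.univ : Finset (Fin (5 - 1))).card • (4 : ℤ) :=
            Finset.sum_le_card_nsmul _ _ _ (fun j _ => hcol j)
        _ = 16 := by simp
    rw [key] at bound; norm_num at bound
  · rintro ⟨D, hrows, hdiffs⟩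
    have h01 := hdiffs 0 1 (by decide)
    have h02 := hdiffs 0 2 (by decide)
    have h12 := hdiffs 1 2 (by decide)
    have hQ : ∑ z ∈ (Iset 7 \ {0}), z ^ 2 = 28 := by decide
    have key := colsum_sq hQ (hrows 0) (hrows 1) (hrows 2) h01 h02 h12
    -- facts about a generic column
    have hcolfacts : ∀ j : Fin (7 - 1),
        (-3 ≤ D 0 j ∧ D 0 j ≤ 3 ∧ D 0 j ≠ 0) ∧
        (-3 ≤ D 1 j ∧ D 1 j ≤ 3 ∧ D 1 j ≠ 0) ∧
        (-3 ≤ D 2 j ∧ D 2 j ≤ 3 ∧ D 2 j ≠ 0) ∧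
        (-3 ≤ D 1 j - D 0 j ∧ D 1 j - D 0 j ≤ 3 ∧ D 1 j - D 0 j ≠ 0) ∧
        (-3 ≤ D 2 j - D 0 j ∧ D 2 j - D 0 j ≤ 3 ∧ D 2 j - D 0 j ≠ 0) ∧
        (-3 ≤ D 2 j - D 1 j ∧ D 2 j - D 1 j ≤ 3 ∧ D 2 j - D 1 j ≠ 0) := by
      intro j
      have h0 := (hrows 0).1 j
      have h1 := (hrows 1).1 j
      have h2 := (hrows 2).1 j
      have d01 := h01.1 j
      have d02 := h02.1 j
      have d12 := h12.1 j
      simp only [Iset, Finset.mem_sdiff, Finset.mem_singleton, Finset.mem_Icc] at h0 h1 h2 d01 d02 d12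
      norm_num at h0 h1 h2 d01 d02 d12
      omega
    obtain ⟨j1, hj1, -⟩ := h01.2 3 (by decide)
    obtain ⟨j2, hj2, -⟩ := h01.2 (-3) (by decide)
    obtain ⟨j3, hj3, -⟩ := h02.2 3 (by decide)
    obtain ⟨j4, hj4, -⟩ := h02.2 (-3) (by decide)
    have hj1' : D 1 j1 - D 0 j1 = 3 := hj1
    have hj2' : D 1 j2 - D 0 j2 = -3 := hj2
    have hj3' : D 2 j3 - D 0 j3 = 3 := hj3
    have hj4' : D 2 j4 - D 0 j4 = -3 := hj4
    have h12' : j1 ≠ j2 := by intro h; subst h; omega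
    have h13 : j1 ≠ j3 := by
      intro h; subst h; have := hcolfacts j1; omega
    have h14 : j1 ≠ j4 := by
      intro h; subst h; have := hcolfacts j1; omega
    have h23 : j2 ≠ j3 := by
      intro h; subst h; have := hcolfacts j2; omega
    have h24 : j2 ≠ j4 := by
      intro h; subst h; have := hcolfacts j2; omega
    have h34 : j3 ≠ j4 := by intro h; subst h; omega
    classical
    set s : Finset (Fin (7 - 1)) := {j1, j2, j3, j4} with hs
    have hcard : s.card = 4 := by
      rw [hs]
      rw [Finset.card_insert_of_notMem (by simp [h12', h13, h14]),
        Finset.card_insert_of_notMem (by simp [h23, h24]),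
        Finset.card_insert_of_notMem (by simp [h34]), Finset.card_singleton]
    have hsub : s ⊆ Finset.univ := Finset.subset_univ s
    have hsplit := Finset.sum_sdiff (f := fun j => (D 0 j + D 1 j + D 2 j) ^ 2) hsub
    have boundA : ∑ j ∈ s, (D 0 j + D 1 j + D 2 j) ^ 2 ≤ 64 := by
      have hc : ∀ j ∈ s, (D 0 j + D 1 j + D 2 j) ^ 2 ≤ 16 := by
        intro j hj
        have hf := hcolfacts j
        have hev : D 1 j - D 0 j = 3 ∨ D 1 j - D 0 j = -3 ∨ D 2 j - D 0 j = 3 ∨ D 2 j - D 0 j = -3 := by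
          rw [hs] at hj
          simp only [Finset.mem_insert, Finset.mem_singleton] at hj
          rcases hj with h | h | h | h <;> subst h
          · exact Or.inl hj1'
          · exact Or.inr (Or.inl hj2')
          · exact Or.inr (Or.inr (Or.inl hj3'))
          · exact Or.inr (Or.inr (Or.inr hj4'))
        have hs1 : -4 ≤ D 0 j + D 1 j + D 2 j := by omega
        have hs2 : D 0 j + D 1 j + D 2 j ≤ 4 := by omega
        have := sq_le_sq' hs1 hs2
        norm_num at this
        simpa [sq] using this
      calc ∑ j ∈ s, (D 0 j + D 1 j + D 2 j) ^ 2 ≤ s.card • (16 : ℤ) :=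
            Finset.sum_le_card_nsmul _ _ _ hc
        _ = 64 := by rw [hcard]; norm_num
    have boundB : ∑ j ∈ Finset.univ \ s, (D 0 j + D 1 j + D 2 j) ^ 2 ≤ 72 := by
      have hc : ∀ j ∈ Finset.univ \ s, (D 0 j + D 1 j + D 2 j) ^ 2 ≤ 36 := by
        intro j _
        have hf := hcolfacts j
        have hs1 : -6 ≤ D 0 j + D 1 j + D 2 j := by omega
        have hs2 : D 0 j + D 1 j + D 2 j ≤ 6 := by omega
        have := sq_le_sq' hs1 hs2
        norm_num at this
        simpa [sq] using this
      have hcard2 : (Finset.univ \ s).card = 2 := by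
        rw [Finset.card_sdiff_of_subset hsub, hcard]
        simp
      calc ∑ j ∈ Finset.univ \ s, (D 0 j + D 1 j + D 2 j) ^ 2
            ≤ (Finset.univ \ s).card • (36 : ℤ) := Finset.sum_le_card_nsmul _ _ _ hc
        _ = 72 := by rw [hcard2]; norm_num
    rw [key] at hsplit
    linarith [boundA, boundB, hsplit]
end

section
/- Let m1 and m2 be odd positive integers. If there exist a PDM(3, m1), a PDM(3, 2m1−1), and an SIPDM(3, m2, 1), then there exists a PDM(3, m) with m = m1(m2+1) − 1. Moreover, if in addition there exists an SIPDM(3, 2m1−1, 1), then there exists an SIPDM(3, m, 1). -/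
/- ### Auxiliary lemmas for the proof -/


lemma rowPerfect_elim {ι κ : Type*} {S1 S2 : Finset ℤ} {f : ι → ℤ} {g : κ → ℤ}
    (hd : Disjoint S1 S2) (hf : rowPerfect S1 f) (hg : rowPerfect S2 g) :
    rowPerfect (S1 ∪ S2) (Sum.elim f g) := by
  refine ⟨?_, ?_⟩
  · rintro (j | k)
    · exact Finset.mem_union_left _ (hf.1 j)
    · exact Finset.mem_union_right _ (hg.1 k)
  · intro z hz
    rcases Finset.mem_union.mp hz with h | h
    · obtain ⟨j, hj, hju⟩ := hf.2 z h
      refine ⟨Sum.inl j, hj, ?_⟩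
      rintro (j' | k') hj'
      · simpa using hju j' hj'
      · exact absurd h (Finset.disjoint_right.mp hd (hj' ▸ hg.1 k'))
    · obtain ⟨k, hk, hku⟩ := hg.2 z h
      refine ⟨Sum.inr k, hk, ?_⟩
      rintro (j' | k') hj'
      · exact absurd h (Finset.disjoint_left.mp hd (hj' ▸ hf.1 j'))
      · simpa using hku k' hj'

lemma rowPerfect_map {ι : Type*} {S : Finset ℤ} {f : ι → ℤ} (φ : ℤ → ℤ)
    (hf : rowPerfect S f)
    (hinj : ∀ x ∈ S, ∀ y ∈ S, φ x = φ y → x = y) :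
    rowPerfect (S.image φ) (fun j => φ (f j)) := by
  refine ⟨fun j => Finset.mem_image_of_mem φ (hf.1 j), ?_⟩
  intro z hz
  obtain ⟨x, hx, rfl⟩ := Finset.mem_image.mp hz
  obtain ⟨j, hj, hju⟩ := hf.2 x hx
  exact ⟨j, by show φ (f j) = φ x; rw [hj],
    fun j' hj' => hju j' (hinj _ (hf.1 j') _ hx hj')⟩

lemma rowPerfect_prod_s5 {ι κ : Type*} {S1 S2 : Finset ℤ} {f : ι → ℤ} {g : κ → ℤ}
    (φ : ℤ → ℤ → ℤ) (hf : rowPerfect S1 f) (hg : rowPerfect S2 g)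
    (hinj : ∀ x ∈ S1, ∀ y ∈ S2, ∀ x' ∈ S1, ∀ y' ∈ S2, φ x y = φ x' y' → x = x' ∧ y = y') :
    rowPerfect ((S1 ×ˢ S2).image fun p => φ p.1 p.2)
      (fun jk : ι × κ => φ (f jk.1) (g jk.2)) := by
  constructor
  · intro jk
    exact Finset.mem_image.mpr ⟨(f jk.1, g jk.2),
      Finset.mem_product.mpr ⟨hf.1 _, hg.1 _⟩, rfl⟩
  · intro z hz
    obtain ⟨p, hp, rfl⟩ := Finset.mem_image.mp hz
    obtain ⟨hp1, hp2⟩ := Finset.mem_product.mp hp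
    obtain ⟨j, hj, hju⟩ := hf.2 p.1 hp1
    obtain ⟨k, hk, hku⟩ := hg.2 p.2 hp2
    refine ⟨(j, k), by show φ (f j) (g k) = φ p.1 p.2; rw [hj, hk], ?_⟩
    rintro ⟨j', k'⟩ h'
    obtain ⟨h1, h2⟩ := hinj _ (hf.1 j') _ (hg.1 k') _ hp1 _ hp2 h'
    have e1 := hju j' h1
    have e2 := hku k' h2
    simp [Prod.ext_iff, e1, e2]

lemma rowPerfect_reindex {ι ι' : Type*} {S : Finset ℤ} {f : ι → ℤ} (e : ι' ≃ ι)
    (h : rowPerfect S f) : rowPerfect S (fun j => f (e j)) := by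
  refine ⟨fun j => h.1 (e j), fun z hz => ?_⟩
  obtain ⟨j, hj, hju⟩ := h.2 z hz
  refine ⟨e.symm j, ?_, fun y hy => ?_⟩
  · show f (e (e.symm j)) = z
    rw [Equiv.apply_symm_apply]; exact hj
  · exact (Equiv.eq_symm_apply e).mpr (hju (e y) hy)

lemma master {n0 n1 n2 : ℕ} {S0 S1 S2 T : Finset ℤ} (δ : ℤ) (hδ : δ ≠ 0)
    {F : Fin 3 → Fin n0 → ℤ} {A : Fin 3 → Fin n1 → ℤ} {C : Fin 3 → Fin n2 → ℤ}
    (hF : IsPDMOn S0 F) (hA : IsPDMOn S1 A) (hC : IsPDMOn S2 C)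
    (hinj : ∀ x ∈ S1, ∀ y ∈ S2, ∀ x' ∈ S1, ∀ y' ∈ S2,
      2*δ*x + y = 2*δ*x' + y' → x = x' ∧ y = y')
    (hd : Disjoint (S0.image fun x => δ * x)
      ((S1 ×ˢ S2).image fun p => 2*δ*p.1 + p.2))
    (hT : T = (S0.image fun x => δ * x) ∪ (S1 ×ˢ S2).image fun p => 2*δ*p.1 + p.2)
    {N : ℕ} (hN : N = n0 + n1 * n2) :
    ∃ D : Fin 3 → Fin N → ℤ, IsPDMOn T D := by
  have hcancel : ∀ x ∈ S0, ∀ y ∈ S0, δ * x = δ * y → x = y :=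
    fun x _ y _ h => mul_left_cancel₀ hδ h
  have hrows : ∀ i, rowPerfect T (Sum.elim (fun l => δ * F i l)
      (fun jk : Fin n1 × Fin n2 => 2*δ*(A i jk.1) + C i jk.2)) := by
    intro i
    rw [hT]
    exact rowPerfect_elim hd (rowPerfect_map _ (hF.1 i) hcancel)
      (rowPerfect_prod_s5 (fun x y => 2*δ*x + y) (hA.1 i) (hC.1 i) hinj)
  have hdiffs : ∀ s t : Fin 3, s < t →
      rowPerfect T (fun j => (Sum.elim (fun l => δ * F t l)
        (fun jk : Fin n1 × Fin n2 => 2*δ*(A t jk.1) + C t jk.2)) j -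
        (Sum.elim (fun l => δ * F s l)
        (fun jk : Fin n1 × Fin n2 => 2*δ*(A s jk.1) + C s jk.2)) j) := by
    intro s t hst
    have hfun : (fun j => (Sum.elim (fun l => δ * F t l)
        (fun jk : Fin n1 × Fin n2 => 2*δ*(A t jk.1) + C t jk.2)) j -
        (Sum.elim (fun l => δ * F s l)
        (fun jk : Fin n1 × Fin n2 => 2*δ*(A s jk.1) + C s jk.2)) j) =
        Sum.elim (fun l => δ * (F t l - F s l))
          (fun jk : Fin n1 × Fin n2 =>
            2*δ*(A t jk.1 - A s jk.1) + (C t jk.2 - C s jk.2)) := by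
      funext j
      rcases j with l | jk <;> simp only [Sum.elim_inl, Sum.elim_inr] <;> ring
    rw [hfun, hT]
    exact rowPerfect_elim hd (rowPerfect_map _ (hF.2 s t hst) hcancel)
      (rowPerfect_prod_s5 (fun x y => 2*δ*x + y) (hA.2 s t hst) (hC.2 s t hst) hinj)
  let e : Fin N ≃ (Fin n0 ⊕ Fin n1 × Fin n2) :=
    (finCongr hN).trans (finSumFinEquiv.symm.trans
      (Equiv.sumCongr (Equiv.refl _) finProdFinEquiv.symm))
  refine ⟨fun i j => (Sum.elim (fun l => δ * F i l)
      (fun jk : Fin n1 × Fin n2 => 2*δ*(A i jk.1) + C i jk.2)) (e j), ?_, ?_⟩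
  · exact fun i => rowPerfect_reindex e (hrows i)
  · exact fun s t hst => rowPerfect_reindex e (hdiffs s t hst)

lemma keyInj (b δ : ℤ) (hb : 0 ≤ b) (hδ : δ = b + 1) :
    ∀ x x' y y' : ℤ, -b ≤ y → y ≤ b → -b ≤ y' → y' ≤ b →
      2*δ*x + y = 2*δ*x' + y' → x = x' ∧ y = y' := by
  intro x x' y y' h1 h2 h3 h4 heq
  have hδ0 : (0:ℤ) < δ := by omega
  have hxx : x = x' := by
    rcases lt_trichotomy x x' with h | h | h
    · exfalso
      have hx1 : x ≤ x' - 1 := by omega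
      have := mul_le_mul_of_nonneg_left hx1 (by linarith : (0:ℤ) ≤ 2*δ)
      have hexp : 2*δ*(x'-1) = 2*δ*x' - 2*δ := by ring
      linarith
    · exact h
    · exfalso
      have hx1 : x' ≤ x - 1 := by omega
      have := mul_le_mul_of_nonneg_left hx1 (by linarith : (0:ℤ) ≤ 2*δ)
      have hexp : 2*δ*(x-1) = 2*δ*x - 2*δ := by ring
      linarith
  subst hxx
  exact ⟨rfl, by linarith⟩

lemma keyDisj (a b δ : ℤ) (ha : 0 ≤ a) (hb : 0 ≤ b) (hδ : δ = b + 1) :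
    Disjoint ((Finset.Icc (-(2*a)) (2*a)).image fun x => δ * x)
      ((Finset.Icc (-a) a ×ˢ (Finset.Icc (-b) b \ {0})).image
        fun p => 2*δ*p.1 + p.2) := by
  have hδ0 : (0:ℤ) < δ := by omega
  rw [Finset.disjoint_left]
  intro z hz1 hz2
  obtain ⟨x, hx, hzx⟩ := Finset.mem_image.mp hz1
  obtain ⟨p, hp, hzp⟩ := Finset.mem_image.mp hz2
  obtain ⟨hp1, hp2⟩ := Finset.mem_product.mp hp
  obtain ⟨hp2b, hp20⟩ := Finset.mem_sdiff.mp hp2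
  rw [Finset.mem_Icc] at hp2b
  have hp0 : p.2 ≠ 0 := by simpa using hp20
  have heq : δ * x = 2*δ*p.1 + p.2 := by rw [hzx, hzp]
  have hc : p.2 = δ * (x - 2*p.1) := by linear_combination -heq
  rcases lt_trichotomy (x - 2*p.1) 0 with h | h | h
  · have h1 : x - 2*p.1 ≤ -1 := by omega
    have := mul_le_mul_of_nonneg_left h1 (le_of_lt hδ0)
    have hexp : δ * (-1:ℤ) = -δ := by ring
    have : p.2 ≤ -δ := by linarith
    omega
  · exact hp0 (by rw [hc, h, mul_zero])
  · have h1 : (1:ℤ) ≤ x - 2*p.1 := by omega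
    have := mul_le_mul_of_nonneg_left h1 (le_of_lt hδ0)
    have hexp : δ * (1:ℤ) = δ := by ring
    have : δ ≤ p.2 := by linarith
    omega

lemma keyUnion (a b δ : ℤ) (ha : 0 ≤ a) (hb : 0 ≤ b) (hδ : δ = b + 1) :
    Finset.Icc (-(2*δ*a+b)) (2*δ*a+b) =
      ((Finset.Icc (-(2*a)) (2*a)).image fun x => δ * x) ∪
      ((Finset.Icc (-a) a ×ˢ (Finset.Icc (-b) b \ {0})).image
        fun p => 2*δ*p.1 + p.2) := by
  have hδ0 : (0:ℤ) < δ := by omega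
  have h2δ : (0:ℤ) < 2*δ := by linarith
  have hmono : ∀ u v : ℤ, u ≤ v → 2*δ*u ≤ 2*δ*v :=
    fun u v h => mul_le_mul_of_nonneg_left h (by linarith)
  have hmono1 : ∀ u v : ℤ, u ≤ v → δ*u ≤ δ*v :=
    fun u v h => mul_le_mul_of_nonneg_left h (by linarith)
  ext z
  simp only [Finset.mem_union, Finset.mem_image, Finset.mem_Icc, Finset.mem_sdiff,
    Finset.mem_product, Finset.mem_singleton]
  constructor
  · rintro ⟨hz1, hz2⟩
    have hdiv := Int.mul_ediv_add_emod (z + b) (2*δ)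
    have hm0 := Int.emod_nonneg (z + b) (by linarith : (2*δ) ≠ 0)
    have hm1 := Int.emod_lt_of_pos (z + b) h2δ
    set k := (z + b) / (2*δ) with hkdef
    set t := (z + b) % (2*δ) with htdef
    have hz : z = 2*δ*k + t - b := by linarith
    rcases eq_or_ne t b with h0 | h0
    · left
      refine ⟨2*k, ⟨?_, ?_⟩, by rw [hz, h0]; ring⟩
      · by_contra hcon
        have hk1 : k ≤ -a - 1 := by omega
        have := hmono k (-a-1) hk1
        have hexp : 2*δ*(-a-1) = -(2*δ*a) - 2*δ := by ring
        linarith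
      · by_contra hcon
        have hk1 : a + 1 ≤ k := by omega
        have := hmono (a+1) k hk1
        have hexp : 2*δ*(a+1) = 2*δ*a + 2*δ := by ring
        linarith
    · rcases eq_or_ne t (b + δ) with h1 | h1
      · left
        refine ⟨2*k+1, ⟨?_, ?_⟩, by rw [hz, h1]; ring⟩
        · by_contra hcon
          have hk1 : k ≤ -a - 1 := by omega
          have := hmono k (-a-1) hk1
          have hexp : 2*δ*(-a-1) = -(2*δ*a) - 2*δ := by ring
          linarith
        · by_contra hcon
          have hk1 : a ≤ k := by omega
          have := hmono a k hk1
          linarith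
      · right
        have htb : t - b ≤ b := by omega
        have htb2 : -b ≤ t - b := by omega
        refine ⟨(k, t - b), ⟨⟨?_, ?_⟩, ⟨htb2, htb⟩, by omega⟩, by rw [hz]; ring⟩
        · by_contra hcon
          have hk1 : k ≤ -a - 1 := by omega
          have := hmono k (-a-1) hk1
          have hexp : 2*δ*(-a-1) = -(2*δ*a) - 2*δ := by ring
          linarith
        · by_contra hcon
          have hk1 : a + 1 ≤ k := by omega
          have := hmono (a+1) k hk1
          have hexp : 2*δ*(a+1) = 2*δ*a + 2*δ := by ring
          linarith
  · rintro (⟨x, ⟨hx1, hx2⟩, rfl⟩ | ⟨⟨x, y⟩, ⟨⟨hx1, hx2⟩, ⟨hy1, hy2⟩, hy0⟩, rfl⟩)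
    · have l1 := hmono1 x (2*a) hx2
      have l2 := hmono1 (-(2*a)) x hx1
      have e1 : δ*(2*a) = 2*δ*a := by ring
      have e2 : δ*(-(2*a)) = -(2*δ*a) := by ring
      constructor <;> linarith
    · have l1 := hmono x a hx2
      have l2 := hmono (-a) x hx1
      have e2 : 2*δ*(-a) = -(2*δ*a) := by ring
      constructor <;> simp only [] <;> linarith

lemma keyUnion' (a b δ : ℤ) (ha : 0 ≤ a) (hb : 0 ≤ b) (hδ : δ = b + 1) :
    Finset.Icc (-(2*δ*a+b)) (2*δ*a+b) \ {0} =
      (((Finset.Icc (-(2*a)) (2*a)) \ {0}).image fun x => δ * x) ∪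
      ((Finset.Icc (-a) a ×ˢ (Finset.Icc (-b) b \ {0})).image
        fun p => 2*δ*p.1 + p.2) := by
  have h0X : (0:ℤ) ∈ (Finset.Icc (-(2*a)) (2*a)).image fun x => δ * x :=
    Finset.mem_image.mpr ⟨0, by simp [Finset.mem_Icc]; omega, by ring⟩
  have h0Y : (0:ℤ) ∉ (Finset.Icc (-a) a ×ˢ (Finset.Icc (-b) b \ {0})).image
      (fun p => 2*δ*p.1 + p.2) :=
    Finset.disjoint_left.mp (keyDisj a b δ ha hb hδ) h0X
  have himg : ((Finset.Icc (-(2*a)) (2*a)) \ {0}).image (fun x => δ * x) =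
      ((Finset.Icc (-(2*a)) (2*a)).image fun x => δ * x) \ {0} := by
    rw [Finset.image_sdiff _ _ (mul_right_injective₀ (by omega : δ ≠ 0)),
      Finset.image_singleton, mul_zero]
  rw [himg]
  have hu := keyUnion a b δ ha hb hδ
  ext z
  simp only [Finset.mem_union, Finset.mem_sdiff, Finset.mem_singleton]
  constructor
  · rintro ⟨hzT, hz0⟩
    rw [hu] at hzT
    rcases Finset.mem_union.mp hzT with h | h
    · exact Or.inl ⟨h, hz0⟩
    · exact Or.inr h
  · rintro (⟨hzX, hz0⟩ | hzY)
    · refine ⟨?_, hz0⟩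
      rw [hu]; exact Finset.mem_union_left _ hzX
    · refine ⟨?_, fun h => h0Y (h ▸ hzY)⟩
      rw [hu]; exact Finset.mem_union_right _ hzY

lemma Iset_eq (m : ℕ) (r : ℤ) (h : ((m:ℤ) - 1)/2 = r) :
    Iset m = Finset.Icc (-r) r := by rw [Iset, h]


/-- Theorem 2.6.  If there exist a `PDM(3,m1)`, a `PDM(3,2m1-1)`
and an `SIPDM(3,m2,1)`, then there exists a `PDM(3, m1(m2+1)-1)`; if moreover an
`SIPDM(3,2m1-1,1)` exists, then an `SIPDM(3, m1(m2+1)-1, 1)` exists. -/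
theorem stmt5 (m1 m2 : ℕ) (hm1 : Odd m1) (hm1pos : 0 < m1)
    (hm2 : Odd m2) (hm2pos : 0 < m2)
    (h1 : PDMexists 3 m1) (h2 : PDMexists 3 (2 * m1 - 1)) (h3 : SIPDMexists 3 m2) :
    PDMexists 3 (m1 * (m2 + 1) - 1) ∧
    (SIPDMexists 3 (2 * m1 - 1) → SIPDMexists 3 (m1 * (m2 + 1) - 1)) := by
  obtain ⟨a, ha0⟩ := hm1
  obtain ⟨b, hb0⟩ := hm2
  have ha : m1 = 2 * a + 1 := by omega
  have hb : m2 = 2 * b + 1 := by omega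
  clear ha0 hb0
  subst ha; subst hb
  obtain ⟨δZ, hδdef⟩ : ∃ d : ℤ, d = (b : ℤ) + 1 := ⟨_, rfl⟩
  have haZ0 : 0 ≤ (a : ℤ) := Int.natCast_nonneg a
  have hbZ0 : 0 ≤ (b : ℤ) := Int.natCast_nonneg b
  have hδ0 : δZ ≠ 0 := by omega
  have hI1 : Iset (2*a+1) = Finset.Icc (-(a:ℤ)) (a:ℤ) := Iset_eq _ _ (by omega)
  have hI0 : Iset (2*(2*a+1) - 1) = Finset.Icc (-(2*(a:ℤ))) (2*(a:ℤ)) :=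
    Iset_eq _ _ (by omega)
  have hI2 : Iset (2*b+1) \ {0} = Finset.Icc (-(b:ℤ)) (b:ℤ) \ {0} := by
    rw [Iset_eq (2*b+1) (b:ℤ) (by omega)]
  obtain ⟨Q, hQ⟩ : ∃ q : ℤ, q = 2*δZ*(a:ℤ) + (b:ℤ) := ⟨_, rfl⟩
  have hPZ : (((2*a+1) * ((2*b+1) + 1) : ℕ) : ℤ) = 2*Q + 2 := by
    rw [hQ, hδdef]; push_cast; ring
  have hIM : Iset ((2*a+1) * ((2*b+1) + 1) - 1) = Finset.Icc (-Q) Q :=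
    Iset_eq _ _ (by omega)
  have hprod1 : (2*a+1) * ((2*b+1) + 1) = 4*(a*b) + 4*a + 2*b + 2 := by ring
  have hprod2 : (2*a+1) * ((2*b+1) - 1) = 4*(a*b) + 2*b := by
    rw [show (2*b+1) - 1 = 2*b from by omega]; ring
  have hN1 : (2*a+1) * ((2*b+1) + 1) - 1 = (2*(2*a+1) - 1) + (2*a+1) * ((2*b+1) - 1) := by
    omega
  have hN2 : (2*a+1) * ((2*b+1) + 1) - 1 - 1 =
      (2*(2*a+1) - 1 - 1) + (2*a+1) * ((2*b+1) - 1) := by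
    omega
  obtain ⟨A, hA⟩ := h1
  obtain ⟨C, hC⟩ := h3
  rw [hI1] at hA
  rw [hI2] at hC
  have hinj : ∀ x ∈ Finset.Icc (-(a:ℤ)) (a:ℤ), ∀ y ∈ Finset.Icc (-(b:ℤ)) (b:ℤ) \ {0},
      ∀ x' ∈ Finset.Icc (-(a:ℤ)) (a:ℤ), ∀ y' ∈ Finset.Icc (-(b:ℤ)) (b:ℤ) \ {0},
      2*δZ*x + y = 2*δZ*x' + y' → x = x' ∧ y = y' := by
    intro x hx y hy x' hx' y' hy' heq
    have hy1 := Finset.mem_Icc.mp (Finset.mem_sdiff.mp hy).1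
    have hy2 := Finset.mem_Icc.mp (Finset.mem_sdiff.mp hy').1
    exact keyInj (b:ℤ) δZ hbZ0 hδdef x x' y y' hy1.1 hy1.2 hy2.1 hy2.2 heq
  have hd := keyDisj (a:ℤ) (b:ℤ) δZ haZ0 hbZ0 hδdef
  have hu := keyUnion (a:ℤ) (b:ℤ) δZ haZ0 hbZ0 hδdef
  have hu' := keyUnion' (a:ℤ) (b:ℤ) δZ haZ0 hbZ0 hδdef
  rw [← hQ] at hu hu'
  constructor
  · obtain ⟨F, hF⟩ := h2
    rw [hI0] at hF
    rw [PDMexists, hIM]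
    exact master δZ hδ0 hF hA hC hinj hd hu hN1
  · rintro ⟨F, hF⟩
    have hI0' : Iset (2*(2*a+1) - 1) \ {0} =
        Finset.Icc (-(2*(a:ℤ))) (2*(a:ℤ)) \ {0} := by rw [hI0]
    rw [hI0'] at hF
    rw [SIPDMexists, hIM]
    have hd' : Disjoint
        ((Finset.Icc (-(2*(a:ℤ))) (2*(a:ℤ)) \ {0}).image fun x => δZ * x)
        ((Finset.Icc (-(a:ℤ)) (a:ℤ) ×ˢ (Finset.Icc (-(b:ℤ)) (b:ℤ) \ {0})).image
          fun p => 2*δZ*p.1 + p.2) :=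
      hd.mono_left (Finset.image_subset_image Finset.sdiff_subset)
    exact master δZ hδ0 hF hA hC hinj hd' hu' hN2
end

section
/- If there exists a (g, W, 1)-PDF with exactly q_w·M blocks of size w for each w ∈ W (where M is the total number of blocks and Q records these proportions), then there exists a perfect (g, W, 1, Q)-NCW-SOOC with M codewords; in particular, the blocks of the PDF, translated into subsets of {1, …, g}, form an (g, W, 1, Q)-NCW-SOOC of minimum possible length g among all NCW-SOOCs with M codewords and the same multiset of weights. -/
/-- An `(n,W,1,Q)`-NCW-SOOC with `M` codewords: codewords are subsets of
`{1, …, n}` with weights in `W`; for each `w ∈ W` the number of codewords of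
weight `w` is `Q w · M` (weight distribution); the quantities
`d^i_{jk} = c^i_k - c^i_j - 1` (equivalently the directed differences) are pairwise
distinct within each codeword and between distinct codewords (auto/cross
correlation `1`); and `n ≥ 2D + 3` where `D` is the maximal `d^i_{jk}`. -/
def IsNCWSOOC (n : ℕ) (W : Finset ℕ) (Q : ℕ → ℚ) (M : ℕ)
    (C : Fin M → Finset ℤ) : Prop :=
  (∀ i, C i ⊆ Finset.Icc 1 (n : ℤ)) ∧
  (∀ i, (C i).card ∈ W) ∧
  (∀ w ∈ W, ((Finset.univ.filter (fun i => (C i).card = w)).card : ℚ) = Q w * M) ∧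
  (deltaFam C).Nodup ∧
  (∀ d ∈ deltaFam C, 2 * (d - 1) + 3 ≤ (n : ℤ))

/- ### Auxiliary lemmas -/

private def addEmb (z : ℤ) : ℤ ↪ ℤ := ⟨(· + z), add_left_injective z⟩

private lemma prodmap_aux (C : Finset ℤ) (z : ℤ) :
    (C.map (addEmb z)) ×ˢ (C.map (addEmb z)) = (C ×ˢ C).map ((addEmb z).prodMap (addEmb z)) := by
  ext ⟨a, b⟩
  simp [Function.Embedding.prodMap, addEmb, Prod.ext_iff]
  aesop

private lemma deltaB_image (C : Finset ℤ) (z : ℤ) : deltaB (C.image (· + z)) = deltaB C := by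
  have h : C.image (· + z) = C.map (addEmb z) := by simp [addEmb, Finset.map_eq_image]
  rw [deltaB, h, prodmap_aux, Finset.filter_map, Finset.map_val, Multiset.map_map]
  simp [Function.comp, Function.comp_def, Finset.filter_val, Function.Embedding.prodMap, addEmb, deltaB]

private lemma mem_deltaB {C : Finset ℤ} {d : ℤ} :
    d ∈ deltaB C ↔ ∃ a ∈ C, ∃ b ∈ C, b < a ∧ a - b = d := by
  simp only [deltaB, Multiset.mem_map, Multiset.mem_filter, Finset.filter_val]
  constructor
  · rintro ⟨⟨a, b⟩, ⟨hab, hlt⟩, rfl⟩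
    have h2 := Finset.mem_product.1 (Finset.mem_def.2 hab)
    exact ⟨a, h2.1, b, h2.2, hlt, rfl⟩
  · rintro ⟨a, ha, b, hb, hlt, rfl⟩
    refine ⟨(a, b), ⟨?_, hlt⟩, rfl⟩
    rw [← Finset.mem_def, Finset.mem_product]
    exact ⟨ha, hb⟩

private lemma mem_deltaFam {t : ℕ} {C : Fin t → Finset ℤ} {d : ℤ} :
    d ∈ deltaFam C ↔ ∃ i, d ∈ deltaB (C i) := by
  simp [deltaFam, Multiset.mem_bind]

private lemma card_deltaB (C : Finset ℤ) :
    2 * Multiset.card (deltaB C) + C.card = C.card ^ 2 := by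
  have hcard : Multiset.card (deltaB C) = ((C ×ˢ C).filter (fun p => p.2 < p.1)).card := by
    simp [deltaB, Finset.filter_val, Finset.card]
  have hswap : ((C ×ˢ C).filter (fun p => p.2 < p.1)).card
      = ((C ×ˢ C).filter (fun p => p.1 < p.2)).card := by
    apply Finset.card_nbij (fun p => p.swap)
    · intro p hp; simp_all [Finset.mem_filter, Finset.mem_product]
    · intro p hp q hq h; exact Prod.swap_injective h
    · intro p hp; exact ⟨p.swap, by simp_all [Finset.mem_filter, Finset.mem_product], by simp⟩
  have hdiag : ((C ×ˢ C).filter (fun p => p.1 = p.2)).card = C.card := by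
    symm
    apply Finset.card_nbij (fun a => (a, a))
    · intro a ha; simp_all [Finset.mem_filter, Finset.mem_product]
    · intro a _ b _ h; exact congrArg Prod.fst h
    · intro p hp
      simp [Finset.mem_filter, Finset.mem_product] at hp
      exact ⟨p.1, by simp [hp.1.1], by simp [Prod.ext_iff, hp.2]⟩
  have hsplit : ((C ×ˢ C).filter (fun p => p.2 < p.1)).card
      + ((C ×ˢ C).filter (fun p => ¬ p.2 < p.1)).card = (C ×ˢ C).card :=
    Finset.card_filter_add_card_filter_not _
  have hsplit2 : ((C ×ˢ C).filter (fun p => ¬ p.2 < p.1)).card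
      = ((C ×ˢ C).filter (fun p => p.1 < p.2)).card
        + ((C ×ˢ C).filter (fun p => p.1 = p.2)).card := by
    rw [show ((C ×ˢ C).filter (fun p => ¬ p.2 < p.1))
        = ((C ×ˢ C).filter (fun p => p.1 < p.2 ∨ p.1 = p.2)) from
      Finset.filter_congr (by intro p _; simp [not_lt, le_iff_lt_or_eq])]
    rw [Finset.filter_or]
    exact Finset.card_union_of_disjoint
      (Finset.disjoint_filter.2 (fun p _ h => ne_of_lt h))
  have hprod : (C ×ˢ C).card = C.card ^ 2 := by
    rw [Finset.card_product]; ring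
  omega

private lemma card_deltaB_eq (C : Finset ℤ) :
    Multiset.card (deltaB C) = (C.card ^ 2 - C.card) / 2 := by
  have := card_deltaB C
  omega

private lemma card_deltaFam {M : ℕ} (W : Finset ℕ) (C : Fin M → Finset ℤ)
    (h : ∀ i, (C i).card ∈ W) :
    Multiset.card (deltaFam C)
      = ∑ w ∈ W, (Finset.univ.filter (fun i => (C i).card = w)).card * ((w ^ 2 - w) / 2) := by
  have h1 : Multiset.card (deltaFam C) = ∑ i, Multiset.card (deltaB (C i)) := by
    simp only [deltaFam, Multiset.card_bind]
    rfl
  rw [h1]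
  rw [← Finset.sum_fiberwise_of_maps_to (g := fun i => (C i).card)
    (fun i _ => h i) (fun i => Multiset.card (deltaB (C i)))]
  refine Finset.sum_congr rfl fun w _ => ?_
  rw [Finset.sum_congr rfl (fun i hi => ?_), Finset.sum_const, smul_eq_mul]
  rw [card_deltaB_eq, (Finset.mem_filter.1 hi).2]

/-- Theorem 4.8.  If there is a `(g,W,1)`-PDF with `M` blocks in
which, for each `w ∈ W`, the proportion of blocks of size `w` is `Q w`, then its
blocks, translated into subsets of `{1, …, g}`, form a perfect `(g,W,1,Q)`-NCW-SOOC
with `M` codewords: an NCW-SOOC of minimum possible length among all NCW-SOOCs with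
`M` codewords and the same weight distribution. -/
theorem stmt19 (g : ℕ) (hg : Odd g) (hg3 : 3 ≤ g)
    (W : Finset ℕ) (hW : ∀ w ∈ W, 2 ≤ w)
    (M : ℕ) (B : Fin M → Finset ℤ) (Q : ℕ → ℚ)
    (hsizes : ∀ i, (B i).card ∈ W)
    (hQ : ∀ w ∈ W, ((Finset.univ.filter (fun i => (B i).card = w)).card : ℚ) = Q w * M)
    (hPDF : deltaFam B = (Finset.Icc (1 : ℤ) (((g : ℤ) - 1) / 2)).val) :
    ∃ z : Fin M → ℤ,
      IsNCWSOOC g W Q M (fun i => (B i).image (· + z i)) ∧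
      ∀ (n' : ℕ) (C' : Fin M → Finset ℤ), IsNCWSOOC n' W Q M C' → g ≤ n' := by
  have hne : ∀ i, (B i).Nonempty := fun i =>
    Finset.card_pos.1 (by have := hW _ (hsizes i); omega)
  set z : Fin M → ℤ := fun i => 1 - (B i).min' (hne i) with hz
  have hc : ∀ i, ((B i).image (· + z i)).card = (B i).card := fun i =>
    Finset.card_image_of_injective _ (add_left_injective _)
  have hdeltaimg : deltaFam (fun i => (B i).image (· + z i)) = deltaFam B := by
    simp only [deltaFam]
    congr 1
    funext i
    exact deltaB_image _ _
  refine ⟨z, ⟨?_, ?_, ?_, ?_, ?_⟩, ?_⟩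
  · -- subset of Icc 1 g
    intro i x hx
    simp only [Finset.mem_image] at hx
    obtain ⟨a, ha, rfl⟩ := hx
    have hmin := (B i).min'_le a ha
    rw [Finset.mem_Icc]
    simp only [hz]
    constructor
    · omega
    · rcases eq_or_lt_of_le hmin with heq | hlt
      · rw [← heq]; omega
      · have hd : a - (B i).min' (hne i) ∈ deltaFam B :=
          mem_deltaFam.2 ⟨i, mem_deltaB.2 ⟨a, ha, _, (B i).min'_mem (hne i), hlt, rfl⟩⟩
        rw [hPDF, ← Finset.mem_def, Finset.mem_Icc] at hd
        have : ((g : ℤ) - 1) / 2 ≤ (g : ℤ) - 1 := by omega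
        omega
  · -- weights
    intro i
    rw [hc]
    exact hsizes i
  · -- weight distribution
    intro w hw
    simp only [hc]
    exact hQ w hw
  · -- nodup
    rw [hdeltaimg, hPDF]; exact (Finset.Icc _ _).nodup
  · -- D bound
    intro d hd
    rw [hdeltaimg, hPDF, ← Finset.mem_def, Finset.mem_Icc] at hd
    omega
  · -- minimality
    rintro n' C' ⟨hsub, hw', hq', hnd, hD⟩
    -- counts are equal
    have hcounts : ∀ w ∈ W, (Finset.univ.filter (fun i => (C' i).card = w)).card
        = (Finset.univ.filter (fun i => (B i).card = w)).card := by
      intro w hw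
      have := (hq' w hw).trans (hQ w hw).symm
      exact_mod_cast this
    have hcardeq : Multiset.card (deltaFam C') = Multiset.card (deltaFam B) := by
      rw [card_deltaFam W C' hw', card_deltaFam W B hsizes]
      exact Finset.sum_congr rfl fun w hw => by rw [hcounts w hw]
    -- deltaFam C' sits inside Icc 1 ((n'-1)/2)
    have hsubIcc : deltaFam C' ⊆ (Finset.Icc (1 : ℤ) (((n' : ℤ) - 1) / 2)).val := by
      intro d hd
      obtain ⟨i, hdi⟩ := mem_deltaFam.1 hd
      obtain ⟨a, ha, b, hb, hlt, rfl⟩ := mem_deltaB.1 hdi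
      have hDd := hD _ hd
      have ha' := Finset.mem_Icc.1 (hsub i ha)
      have hb' := Finset.mem_Icc.1 (hsub i hb)
      rw [← Finset.mem_def, Finset.mem_Icc]
      omega
    have hle : deltaFam C' ≤ (Finset.Icc (1 : ℤ) (((n' : ℤ) - 1) / 2)).val :=
      (Multiset.le_iff_subset hnd).2 hsubIcc
    have h1 : (Finset.Icc (1 : ℤ) (((g : ℤ) - 1) / 2)).card
        ≤ (Finset.Icc (1 : ℤ) (((n' : ℤ) - 1) / 2)).card := by
      have h2 := Multiset.card_le_card hle
      rw [hcardeq, hPDF] at h2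
      exact h2
    rw [Int.card_Icc, Int.card_Icc] at h1
    obtain ⟨k, hk⟩ := hg
    omega
end
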